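/- Define the block-matrix norm ‖x‖_{p,n} on M_n(M_k) (Haagerup L_p = Schatten class S_p(M_k)) as the infimum of (1/2)(‖f‖_p + ‖g‖_p) over positive semidefinite f, g ∈ M_k with [[f ⊗ 1_n, x],[x*, g ⊗ 1_n]] ≥ 0. Then this norm satisfies the triangle inequality: ‖x + y‖_{p,n} ≤ ‖x‖_{p,n} + ‖y‖_{p,n}. -/

import Mathlib

open Matrix Kronecker ComplexOrder

/-- Schatten `p`-norm of a complex `k × k` matrix: `(∑ sᵢ^p)^(1/p)` where `sᵢ` are the
singular values (square roots of the eigenvalues of `aᴴ * a`). -/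
noncomputable def sNorm (p : ℝ) {k : ℕ} (a : Matrix (Fin k) (Fin k) ℂ) : ℝ :=
  (∑ i, Real.sqrt ((Matrix.posSemidef_conjTranspose_mul_self a).1.eigenvalues i) ^ p) ^ (1 / p)

/-- The block-matrix norm `‖x‖_{p,n}` on `M_n(M_k)` (modeled as matrices indexed by
`Fin k × Fin n`): infimum of `(1/2)(‖f‖_p + ‖g‖_p)` over positive semidefinite `f, g ∈ M_k`
such that `[[f ⊗ 1ₙ, x], [xᴴ, g ⊗ 1ₙ]]` is positive semidefinite. -/
noncomputable def blockNorm (p : ℝ) {k n : ℕ}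
    (x : Matrix (Fin k × Fin n) (Fin k × Fin n) ℂ) : ℝ :=
  sInf { r : ℝ | ∃ f g : Matrix (Fin k) (Fin k) ℂ, f.PosSemidef ∧ g.PosSemidef ∧
    (Matrix.fromBlocks (f ⊗ₖ (1 : Matrix (Fin n) (Fin n) ℂ)) x
      xᴴ (g ⊗ₖ (1 : Matrix (Fin n) (Fin n) ℂ))).PosSemidef ∧
    r = (1 / 2) * (sNorm p f + sNorm p g) }

section Auxiliary

open Polynomial Finset

/-- Characteristic polynomial is invariant under unitary conjugation. -/
lemma charpoly_unitary_conj {m : Type*} [Fintype m] [DecidableEq m]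
    (U : Matrix.unitaryGroup m ℂ) (M : Matrix m m ℂ) :
    ((U : Matrix m m ℂ) * M * star (U : Matrix m m ℂ)).charpoly = M.charpoly := by
  have hUU : (U : Matrix m m ℂ) * star (U : Matrix m m ℂ) = 1 :=
    (Matrix.mem_unitaryGroup_iff).mp U.2
  have h1 : Matrix.charmatrix ((U : Matrix m m ℂ) * M * star (U : Matrix m m ℂ))
      = (C : ℂ →+* ℂ[X]).mapMatrix (U : Matrix m m ℂ) * M.charmatrix
        * (C : ℂ →+* ℂ[X]).mapMatrix (star (U : Matrix m m ℂ)) := by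
    rw [Matrix.charmatrix, Matrix.charmatrix, _root_.map_mul, _root_.map_mul, mul_sub, sub_mul]
    congr 1
    rw [Matrix.scalar_apply, ← Matrix.smul_one_eq_diagonal, mul_smul_comm, smul_mul_assoc,
      mul_one, ← _root_.map_mul, hUU, _root_.map_one]
  have h2 : ((C : ℂ →+* ℂ[X]).mapMatrix (U : Matrix m m ℂ)).det
      * ((C : ℂ →+* ℂ[X]).mapMatrix (star (U : Matrix m m ℂ))).det = 1 := by
    rw [← Matrix.det_mul, ← _root_.map_mul, hUU, _root_.map_one, Matrix.det_one]
  unfold Matrix.charpoly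
  rw [h1, Matrix.det_mul, Matrix.det_mul]
  calc ((C : ℂ →+* ℂ[X]).mapMatrix (U : Matrix m m ℂ)).det * M.charmatrix.det
        * ((C : ℂ →+* ℂ[X]).mapMatrix (star (U : Matrix m m ℂ))).det
      = M.charmatrix.det * (((C : ℂ →+* ℂ[X]).mapMatrix (U : Matrix m m ℂ)).det
        * ((C : ℂ →+* ℂ[X]).mapMatrix (star (U : Matrix m m ℂ))).det) := by ring
    _ = M.charmatrix.det := by rw [h2, mul_one]

lemma roots_of_unitary_diag {k : ℕ} {M : Matrix (Fin k) (Fin k) ℂ}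
    (V : Matrix.unitaryGroup (Fin k) ℂ) (b : Fin k → ℝ)
    (hMV : M = (V : Matrix (Fin k) (Fin k) ℂ) * Matrix.diagonal (fun i => (b i : ℂ))
      * star (V : Matrix (Fin k) (Fin k) ℂ)) :
    M.charpoly.roots = Finset.univ.val.map (fun i => (b i : ℂ)) := by
  rw [hMV, charpoly_unitary_conj]
  have hd : (Matrix.diagonal (fun i => (b i : ℂ))).charpoly
      = ∏ i : Fin k, (X - C ((b i : ℂ))) := by
    rw [Matrix.charpoly_of_upperTriangular _ (Matrix.blockTriangular_diagonal _)]
    simp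
  rw [hd]
  have : ∏ i : Fin k, (X - C ((b i : ℂ)))
      = ((Finset.univ.val.map (fun i => (b i : ℂ))).map (fun a => X - C a)).prod := by
    rw [Multiset.map_map]; rfl
  rw [this, Polynomial.roots_multiset_prod_X_sub_C]

/-- Sums of a function of the eigenvalues are determined by any unitary diagonalization. -/
lemma sum_eig_eq {k : ℕ} (M : Matrix (Fin k) (Fin k) ℂ) (hM : M.IsHermitian)
    (V : Matrix.unitaryGroup (Fin k) ℂ) (b : Fin k → ℝ)
    (hMV : M = (V : Matrix (Fin k) (Fin k) ℂ) * Matrix.diagonal (fun i => (b i : ℂ))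
      * star (V : Matrix (Fin k) (Fin k) ℂ))
    (g : ℝ → ℝ) : ∑ i, g (hM.eigenvalues i) = ∑ i, g (b i) := by
  have h1 : M.charpoly.roots = Finset.univ.val.map (fun i => ((hM.eigenvalues i : ℝ) : ℂ)) := by
    refine roots_of_unitary_diag hM.eigenvectorUnitary _ ?_
    have := hM.spectral_theorem
    rw [Unitary.conjStarAlgAut_apply] at this
    exact this
  have h2 := h1.symm.trans (roots_of_unitary_diag V b hMV)
  have h3 := congrArg (fun s : Multiset ℂ => (s.map (fun z : ℂ => g z.re)).sum) h2
  simpa [Multiset.map_map, Function.comp_def, Finset.sum] using h3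

/-- For a positive semidefinite matrix, the Schatten norm is the `ℓ^p` norm of the
eigenvalues. -/
lemma sNorm_posSemidef {k : ℕ} (p : ℝ) {A : Matrix (Fin k) (Fin k) ℂ} (hA : A.PosSemidef) :
    sNorm p A = (∑ i, hA.1.eigenvalues i ^ p) ^ (1 / p) := by
  unfold sNorm
  congr 1
  have hdecomp : Aᴴ * A = (hA.1.eigenvectorUnitary : Matrix (Fin k) (Fin k) ℂ)
      * Matrix.diagonal (fun i => ((hA.1.eigenvalues i ^ 2 : ℝ) : ℂ))
      * star (hA.1.eigenvectorUnitary : Matrix (Fin k) (Fin k) ℂ) := by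
    have hVV : star (hA.1.eigenvectorUnitary : Matrix (Fin k) (Fin k) ℂ)
        * (hA.1.eigenvectorUnitary : Matrix (Fin k) (Fin k) ℂ) = 1 :=
      (Matrix.mem_unitaryGroup_iff').mp hA.1.eigenvectorUnitary.2
    have hs : A = (hA.1.eigenvectorUnitary : Matrix (Fin k) (Fin k) ℂ)
        * Matrix.diagonal (fun i => ((hA.1.eigenvalues i : ℝ) : ℂ))
        * star (hA.1.eigenvectorUnitary : Matrix (Fin k) (Fin k) ℂ) := by
      have := hA.1.spectral_theorem
      rw [Unitary.conjStarAlgAut_apply] at this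
      exact this
    calc Aᴴ * A = A * A := by rw [hA.1]
      _ = _ := by
          conv_lhs => rw [hs]
          rw [show ∀ (P D Q : Matrix (Fin k) (Fin k) ℂ), P * D * Q * (P * D * Q)
              = P * (D * (Q * P) * D) * Q from fun P D Q => by
            simp only [mul_assoc], hVV]
          rw [mul_one, Matrix.diagonal_mul_diagonal]
          congr 2
          ext i
          push_cast
          ring_nf
  have key := sum_eig_eq (Aᴴ * A) (Matrix.posSemidef_conjTranspose_mul_self A).1
    hA.1.eigenvectorUnitary (fun i => hA.1.eigenvalues i ^ 2) hdecomp
    (fun t => Real.sqrt t ^ p)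
  rw [key]
  refine Finset.sum_congr rfl fun i _ => ?_
  rw [Real.sqrt_sq (hA.eigenvalues_nonneg i)]

lemma sNorm_nonneg {k : ℕ} (p : ℝ) (a : Matrix (Fin k) (Fin k) ℂ) : 0 ≤ sNorm p a :=
  Real.rpow_nonneg
    (Finset.sum_nonneg fun i _ => Real.rpow_nonneg (Real.sqrt_nonneg _) p) _

/-- The `ℓ^p` sum of the real diagonal of a unitary conjugate of a PSD matrix is bounded by the
`ℓ^p` sum of the eigenvalues (doubly stochastic / convexity argument). -/
lemma sum_diag_rpow_le {k : ℕ} (p : ℝ) (hp : 1 ≤ p) {A : Matrix (Fin k) (Fin k) ℂ}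
    (hA : A.PosSemidef) (U : Matrix.unitaryGroup (Fin k) ℂ) :
    ∑ i, ((star (U : Matrix (Fin k) (Fin k) ℂ) * A * U) i i).re ^ p
      ≤ ∑ i, hA.1.eigenvalues i ^ p := by
  set V : Matrix (Fin k) (Fin k) ℂ := (hA.1.eigenvectorUnitary : Matrix (Fin k) (Fin k) ℂ) with hV
  set T : Matrix (Fin k) (Fin k) ℂ := star (U : Matrix (Fin k) (Fin k) ℂ) * V with hT
  have hVV : V * star V = 1 := (Matrix.mem_unitaryGroup_iff).mp hA.1.eigenvectorUnitary.2
  have hVV' : star V * V = 1 := (Matrix.mem_unitaryGroup_iff').mp hA.1.eigenvectorUnitary.2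
  have hUU : (U : Matrix (Fin k) (Fin k) ℂ) * star (U : Matrix (Fin k) (Fin k) ℂ) = 1 :=
    (Matrix.mem_unitaryGroup_iff).mp U.2
  have hUU' : star (U : Matrix (Fin k) (Fin k) ℂ) * (U : Matrix (Fin k) (Fin k) ℂ) = 1 :=
    (Matrix.mem_unitaryGroup_iff').mp U.2
  have hTT : T * star T = 1 := by
    rw [hT, Matrix.star_mul, star_star, mul_assoc, ← mul_assoc V, hVV, one_mul, hUU']
  have hTT' : star T * T = 1 := by
    rw [hT, Matrix.star_mul, star_star, mul_assoc,
      ← mul_assoc (U : Matrix (Fin k) (Fin k) ℂ), hUU, one_mul, hVV']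
  have hrow : ∀ i, ∑ j, Complex.normSq (T i j) = 1 := by
    intro i
    have h1 : (T * star T) i i = 1 := by rw [hTT]; simp [Matrix.one_apply]
    rw [Matrix.mul_apply] at h1
    have h2 : ((∑ j, Complex.normSq (T i j) : ℝ) : ℂ) = 1 := by
      rw [← h1]
      push_cast
      refine Finset.sum_congr rfl fun j _ => ?_
      rw [Matrix.star_apply, Complex.star_def, Complex.mul_conj]
    exact_mod_cast h2
  have hcol : ∀ j, ∑ i, Complex.normSq (T i j) = 1 := by
    intro j
    have h1 : (star T * T) j j = 1 := by rw [hTT']; simp [Matrix.one_apply]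
    rw [Matrix.mul_apply] at h1
    have h2 : ((∑ i, Complex.normSq (T i j) : ℝ) : ℂ) = 1 := by
      rw [← h1]
      push_cast
      refine Finset.sum_congr rfl fun i _ => ?_
      rw [Matrix.star_apply, Complex.star_def, mul_comm, Complex.mul_conj]
    exact_mod_cast h2
  have hdiag : ∀ i, ((star (U : Matrix (Fin k) (Fin k) ℂ) * A * U) i i).re
      = ∑ j, Complex.normSq (T i j) * hA.1.eigenvalues j := by
    intro i
    have hs : A = V * Matrix.diagonal (fun i => ((hA.1.eigenvalues i : ℝ) : ℂ)) * star V := by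
      have := hA.1.spectral_theorem
      rw [Unitary.conjStarAlgAut_apply] at this
      exact this
    have hTDT : star (U : Matrix (Fin k) (Fin k) ℂ) * A * U
        = T * Matrix.diagonal (fun i => ((hA.1.eigenvalues i : ℝ) : ℂ)) * star T := by
      conv_lhs => rw [hs]
      rw [hT, Matrix.star_mul, star_star]
      simp only [mul_assoc]
    rw [hTDT]
    have heq : (T * Matrix.diagonal (fun i => ((hA.1.eigenvalues i : ℝ) : ℂ)) * star T) i i
        = ((∑ j, Complex.normSq (T i j) * hA.1.eigenvalues j : ℝ) : ℂ) := by
      rw [Matrix.mul_apply]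
      push_cast
      refine Finset.sum_congr rfl fun j _ => ?_
      rw [Matrix.mul_diagonal]
      rw [show (T i j * (hA.1.eigenvalues j : ℂ)) * star T j i
          = (T i j * star T j i) * (hA.1.eigenvalues j : ℂ) from by ring]
      rw [Matrix.star_apply]
      exact congrArg (· * _) (Complex.mul_conj _)
    rw [heq, Complex.ofReal_re]
  calc ∑ i, ((star (U : Matrix (Fin k) (Fin k) ℂ) * A * U) i i).re ^ p
      = ∑ i, (∑ j, Complex.normSq (T i j) * hA.1.eigenvalues j) ^ p := by
        refine Finset.sum_congr rfl fun i _ => ?_; rw [hdiag]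
    _ ≤ ∑ i, ∑ j, Complex.normSq (T i j) * hA.1.eigenvalues j ^ p := by
        refine Finset.sum_le_sum fun i _ => ?_
        exact Real.rpow_arith_mean_le_arith_mean_rpow Finset.univ _ _
          (fun j _ => Complex.normSq_nonneg _) (hrow i)
          (fun j _ => hA.eigenvalues_nonneg j) hp
    _ = ∑ j, (∑ i, Complex.normSq (T i j)) * hA.1.eigenvalues j ^ p := by
        rw [Finset.sum_comm]
        refine Finset.sum_congr rfl fun j _ => ?_
        rw [Finset.sum_mul]
    _ = ∑ j, hA.1.eigenvalues j ^ p := by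
        refine Finset.sum_congr rfl fun j _ => ?_
        rw [hcol, one_mul]

lemma psd_diag_re_nonneg {k : ℕ} {M : Matrix (Fin k) (Fin k) ℂ} (hM : M.PosSemidef) (i : Fin k) :
    0 ≤ (M i i).re := by
  have h := hM.re_dotProduct_nonneg (Pi.single i 1)
  have he : star (Pi.single i (1:ℂ)) ⬝ᵥ (M *ᵥ Pi.single i 1) = M i i := by
    rw [Matrix.mulVec_single]
    simp [dotProduct, Pi.single_apply, Finset.sum_ite_eq', Matrix.star_apply]
  rwa [he] at h

/-- Triangle inequality for the Schatten `p`-norm of positive semidefinite matrices. -/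
lemma sNorm_add_le {k : ℕ} (p : ℝ) (hp : 1 ≤ p) {A B : Matrix (Fin k) (Fin k) ℂ}
    (hA : A.PosSemidef) (hB : B.PosSemidef) :
    sNorm p (A + B) ≤ sNorm p A + sNorm p B := by
  have hp0 : (0:ℝ) < p := lt_of_lt_of_le one_pos hp
  have hD : (A + B).PosSemidef := hA.add hB
  set U := hD.1.eigenvectorUnitary with hU
  set a : Fin k → ℝ := fun i => ((star (U : Matrix (Fin k) (Fin k) ℂ) * A * U) i i).re with ha
  set b : Fin k → ℝ := fun i => ((star (U : Matrix (Fin k) (Fin k) ℂ) * B * U) i i).re with hb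
  have hA' : (star (U : Matrix (Fin k) (Fin k) ℂ) * A * U).PosSemidef := by
    have := hA.conjTranspose_mul_mul_same (U : Matrix (Fin k) (Fin k) ℂ)
    rwa [← Matrix.star_eq_conjTranspose] at this
  have hB' : (star (U : Matrix (Fin k) (Fin k) ℂ) * B * U).PosSemidef := by
    have := hB.conjTranspose_mul_mul_same (U : Matrix (Fin k) (Fin k) ℂ)
    rwa [← Matrix.star_eq_conjTranspose] at this
  have ha0 : ∀ i, 0 ≤ a i := fun i => psd_diag_re_nonneg hA' i
  have hb0 : ∀ i, 0 ≤ b i := fun i => psd_diag_re_nonneg hB' i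
  have hab : ∀ i, hD.1.eigenvalues i = a i + b i := by
    intro i
    have h1 : star (U : Matrix (Fin k) (Fin k) ℂ) * (A + B) * U
        = Matrix.diagonal (fun i => ((hD.1.eigenvalues i : ℝ) : ℂ)) := by
      have := hD.1.conjStarAlgAut_star_eigenvectorUnitary
      rw [Unitary.conjStarAlgAut_star_apply] at this
      exact this
    have h2 : star (U : Matrix (Fin k) (Fin k) ℂ) * (A + B) * U
        = star (U : Matrix (Fin k) (Fin k) ℂ) * A * U
          + star (U : Matrix (Fin k) (Fin k) ℂ) * B * U := by
      rw [mul_add, add_mul]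
    have h3 := congrFun (congrFun (h1.symm.trans h2) i) i
    rw [Matrix.diagonal_apply_eq] at h3
    have := congrArg Complex.re h3
    simpa using this
  calc sNorm p (A + B) = (∑ i, hD.1.eigenvalues i ^ p) ^ (1 / p) := sNorm_posSemidef p hD
    _ = (∑ i, |a i + b i| ^ p) ^ (1 / p) := by
        congr 1
        refine Finset.sum_congr rfl fun i _ => ?_
        rw [hab i, abs_of_nonneg (add_nonneg (ha0 i) (hb0 i))]
    _ ≤ (∑ i, |a i| ^ p) ^ (1 / p) + (∑ i, |b i| ^ p) ^ (1 / p) :=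
        Real.Lp_add_le Finset.univ a b hp
    _ ≤ (∑ i, hA.1.eigenvalues i ^ p) ^ (1 / p)
        + (∑ i, hB.1.eigenvalues i ^ p) ^ (1 / p) := by
        have hha : ∑ i, |a i| ^ p ≤ ∑ i, hA.1.eigenvalues i ^ p := by
          calc ∑ i, |a i| ^ p = ∑ i, a i ^ p := by
                refine Finset.sum_congr rfl fun i _ => by rw [abs_of_nonneg (ha0 i)]
            _ ≤ _ := sum_diag_rpow_le p hp hA U
        have hhb : ∑ i, |b i| ^ p ≤ ∑ i, hB.1.eigenvalues i ^ p := by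
          calc ∑ i, |b i| ^ p = ∑ i, b i ^ p := by
                refine Finset.sum_congr rfl fun i _ => by rw [abs_of_nonneg (hb0 i)]
            _ ≤ _ := sum_diag_rpow_le p hp hB U
        have h0a : 0 ≤ ∑ i, |a i| ^ p :=
          Finset.sum_nonneg fun i _ => Real.rpow_nonneg (abs_nonneg _) p
        have h0b : 0 ≤ ∑ i, |b i| ^ p :=
          Finset.sum_nonneg fun i _ => Real.rpow_nonneg (abs_nonneg _) p
        exact add_le_add (Real.rpow_le_rpow h0a hha (by positivity))
          (Real.rpow_le_rpow h0b hhb (by positivity))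
    _ = sNorm p A + sNorm p B := by rw [sNorm_posSemidef p hA, sNorm_posSemidef p hB]

/-- Adding a large multiple of the identity to a Hermitian matrix gives a PSD matrix. -/
lemma smul_one_add_psd {m : Type*} [Fintype m] [DecidableEq m] {N : Matrix m m ℂ}
    (hN : N.IsHermitian) {c : ℝ} (hc : ∀ i, |hN.eigenvalues i| ≤ c) :
    ((c : ℂ) • 1 + N).PosSemidef := by
  set W : Matrix m m ℂ := (hN.eigenvectorUnitary : Matrix m m ℂ) with hW
  have hWW : W * star W = 1 := (Matrix.mem_unitaryGroup_iff).mp hN.eigenvectorUnitary.2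
  have hs : N = W * Matrix.diagonal (fun i => ((hN.eigenvalues i : ℝ) : ℂ)) * star W := by
    have := hN.spectral_theorem
    rw [Unitary.conjStarAlgAut_apply] at this
    exact this
  have heq : (c : ℂ) • 1 + N
      = W * Matrix.diagonal (fun i => ((c + hN.eigenvalues i : ℝ) : ℂ)) * star W := by
    have hd : Matrix.diagonal (fun i : m => ((c + hN.eigenvalues i : ℝ) : ℂ))
        = (c : ℂ) • 1 + Matrix.diagonal (fun i => ((hN.eigenvalues i : ℝ) : ℂ)) := by
      rw [Matrix.smul_one_eq_diagonal, Matrix.diagonal_add]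
      ext i
      push_cast
      ring
    rw [hd, mul_add, add_mul, ← hs]
    congr 1
    rw [mul_smul_comm, smul_mul_assoc, mul_one, hWW]
  rw [heq]
  have hdp : (Matrix.diagonal (fun i : m => ((c + hN.eigenvalues i : ℝ) : ℂ))).PosSemidef := by
    refine Matrix.PosSemidef.diagonal fun i => ?_
    simp only [Pi.zero_apply]
    rw [Complex.zero_le_real]
    have := (abs_le.mp (hc i)).1
    linarith
  have := hdp.mul_mul_conjTranspose_same W
  rwa [← Matrix.star_eq_conjTranspose] at this

/-- The feasibility set in the definition of `blockNorm`. -/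
def feasSet (p : ℝ) {k n : ℕ} (x : Matrix (Fin k × Fin n) (Fin k × Fin n) ℂ) : Set ℝ :=
  { r : ℝ | ∃ f g : Matrix (Fin k) (Fin k) ℂ, f.PosSemidef ∧ g.PosSemidef ∧
    (Matrix.fromBlocks (f ⊗ₖ (1 : Matrix (Fin n) (Fin n) ℂ)) x
      xᴴ (g ⊗ₖ (1 : Matrix (Fin n) (Fin n) ℂ))).PosSemidef ∧
    r = (1 / 2) * (sNorm p f + sNorm p g) }

lemma blockNorm_eq (p : ℝ) {k n : ℕ} (x : Matrix (Fin k × Fin n) (Fin k × Fin n) ℂ) :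
    blockNorm p x = sInf (feasSet p x) := rfl

lemma feasSet_nonneg (p : ℝ) {k n : ℕ} (x : Matrix (Fin k × Fin n) (Fin k × Fin n) ℂ)
    {r : ℝ} (hr : r ∈ feasSet p x) : 0 ≤ r := by
  obtain ⟨f, g, _, _, _, rfl⟩ := hr
  have := sNorm_nonneg p f
  have := sNorm_nonneg p g
  linarith

lemma feasSet_nonempty (p : ℝ) {k n : ℕ} (x : Matrix (Fin k × Fin n) (Fin k × Fin n) ℂ) :
    (feasSet p x).Nonempty := by
  set N : Matrix ((Fin k × Fin n) ⊕ (Fin k × Fin n)) ((Fin k × Fin n) ⊕ (Fin k × Fin n)) ℂ :=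
    Matrix.fromBlocks 0 x xᴴ 0 with hNdef
  have hN : N.IsHermitian := by
    unfold Matrix.IsHermitian
    rw [hNdef, Matrix.fromBlocks_conjTranspose]
    simp
  set c : ℝ := ∑ i, |hN.eigenvalues i| with hc
  have hc0 : 0 ≤ c := Finset.sum_nonneg fun i _ => abs_nonneg _
  have hcb : ∀ i, |hN.eigenvalues i| ≤ c := fun i =>
    Finset.single_le_sum (f := fun j => |hN.eigenvalues j|) (fun j _ => abs_nonneg _)
      (Finset.mem_univ i)
  set f : Matrix (Fin k) (Fin k) ℂ := (c : ℂ) • 1 with hf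
  have hfpsd : f.PosSemidef := by
    rw [hf, Matrix.smul_one_eq_diagonal]
    refine Matrix.PosSemidef.diagonal fun i => ?_
    simp only [Pi.zero_apply]
    exact Complex.zero_le_real.mpr hc0
  have hkron : f ⊗ₖ (1 : Matrix (Fin n) (Fin n) ℂ)
      = (c : ℂ) • (1 : Matrix (Fin k × Fin n) (Fin k × Fin n) ℂ) := by
    rw [hf, Matrix.smul_kronecker, Matrix.one_kronecker_one]
  have hblock : (Matrix.fromBlocks (f ⊗ₖ (1 : Matrix (Fin n) (Fin n) ℂ)) x
      xᴴ (f ⊗ₖ (1 : Matrix (Fin n) (Fin n) ℂ))).PosSemidef := by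
    have hsplit : Matrix.fromBlocks (f ⊗ₖ (1 : Matrix (Fin n) (Fin n) ℂ)) x
        xᴴ (f ⊗ₖ (1 : Matrix (Fin n) (Fin n) ℂ))
        = (c : ℂ) • 1 + N := by
      rw [hkron, hNdef, ← Matrix.fromBlocks_one, Matrix.fromBlocks_smul,
        Matrix.fromBlocks_add]
      simp
    rw [hsplit]
    exact smul_one_add_psd hN hcb
  exact ⟨(1 / 2) * (sNorm p f + sNorm p f), f, f, hfpsd, hfpsd, hblock, rfl⟩

lemma feasSet_add {k n : ℕ} (p : ℝ) (hp : 1 ≤ p)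
    {x y : Matrix (Fin k × Fin n) (Fin k × Fin n) ℂ} {a b : ℝ}
    (ha : a ∈ feasSet p x) (hb : b ∈ feasSet p y) :
    ∃ s ∈ feasSet p (x + y), s ≤ a + b := by
  obtain ⟨f₁, g₁, hf₁, hg₁, hbl₁, rfl⟩ := ha
  obtain ⟨f₂, g₂, hf₂, hg₂, hbl₂, rfl⟩ := hb
  refine ⟨(1 / 2) * (sNorm p (f₁ + f₂) + sNorm p (g₁ + g₂)), ⟨f₁ + f₂, g₁ + g₂,
    hf₁.add hf₂, hg₁.add hg₂, ?_, rfl⟩, ?_⟩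
  · have hsplit : Matrix.fromBlocks ((f₁ + f₂) ⊗ₖ (1 : Matrix (Fin n) (Fin n) ℂ)) (x + y)
        (x + y)ᴴ ((g₁ + g₂) ⊗ₖ (1 : Matrix (Fin n) (Fin n) ℂ))
        = Matrix.fromBlocks (f₁ ⊗ₖ (1 : Matrix (Fin n) (Fin n) ℂ)) x
            xᴴ (g₁ ⊗ₖ (1 : Matrix (Fin n) (Fin n) ℂ))
          + Matrix.fromBlocks (f₂ ⊗ₖ (1 : Matrix (Fin n) (Fin n) ℂ)) y
            yᴴ (g₂ ⊗ₖ (1 : Matrix (Fin n) (Fin n) ℂ)) := by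
      rw [Matrix.fromBlocks_add, Matrix.add_kronecker, Matrix.add_kronecker,
        Matrix.conjTranspose_add]
    rw [hsplit]
    exact hbl₁.add hbl₂
  · have h1 := sNorm_add_le p hp hf₁ hf₂
    have h2 := sNorm_add_le p hp hg₁ hg₂
    linarith

end Auxiliary

/-- The block-matrix norm `‖·‖_{p,n}` on `M_n(M_k)` satisfies the triangle inequality:
`‖x + y‖_{p,n} ≤ ‖x‖_{p,n} + ‖y‖_{p,n}`. -/
theorem stmt_10 {k n : ℕ} (p : ℝ) (hp : 1 ≤ p)
    (x y : Matrix (Fin k × Fin n) (Fin k × Fin n) ℂ) :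
    blockNorm p (x + y) ≤ blockNorm p x + blockNorm p y := by
  rw [blockNorm_eq, blockNorm_eq, blockNorm_eq]
  have hbdd : BddBelow (feasSet p (x + y)) :=
    ⟨0, fun r hr => feasSet_nonneg p (x + y) hr⟩
  have key : ∀ a ∈ feasSet p x, ∀ b ∈ feasSet p y, sInf (feasSet p (x + y)) ≤ a + b := by
    intro a ha b hb
    obtain ⟨s, hs, hsle⟩ := feasSet_add p hp ha hb
    exact (csInf_le hbdd hs).trans hsle
  have h2 : sInf (feasSet p (x + y)) - sInf (feasSet p x) ≤ sInf (feasSet p y) := by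
    refine le_csInf (feasSet_nonempty p y) fun b hb => ?_
    have h3 : sInf (feasSet p (x + y)) - b ≤ sInf (feasSet p x) := by
      refine le_csInf (feasSet_nonempty p x) fun a ha => ?_
      linarith [key a ha b hb]
    linarith
  linarith
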